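/- arXiv:2509.12018 — 5 statements merged into one kernel-verified Lean document; each statement's English description precedes it below -/
import Mathlib

section
/- Let λ > 0 and let φ: ℝ → ℝ be Lipschitz and bounded below. Then for every x ∈ ℝ, M^λφ(x) = −λ · log ∫ exp(−(φ(x+ζ) + l(ζ))/λ) dΦ_x(ζ), and the integral on the right-hand side is a finite positive real number. -/
open MeasureTheory ProbabilityTheory Real Filter
open scoped Classical

noncomputable section

/-- The Gaussian measure `Φ_x` on `ℝ` with mean `-x` and variance `1`. -/
def Phi (x : ℝ) : Measure ℝ := gaussianReal (-x) 1

/-- Extended-real value of `∫ f dμ`: the Bochner integral when `f` is integrable,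
and `+∞` otherwise (the appropriate convention for functions bounded below). -/
def eInt (f : ℝ → ℝ) (μ : Measure ℝ) : EReal :=
  if Integrable f μ then ((∫ ξ, f ξ ∂μ : ℝ) : EReal) else ⊤

/-- Kullback–Leibler divergence `D_KL(μ‖ν) = ∫ log (dμ/dν) dμ`, equal to `+∞` if `μ` is
not absolutely continuous with respect to `ν` (or if the integral does not exist). -/
def klDiv' (μ ν : Measure ℝ) : EReal :=
  if μ ≪ ν ∧ Integrable (fun ξ => Real.log ((μ.rnDeriv ν ξ).toReal)) μ
  then ((∫ ξ, Real.log ((μ.rnDeriv ν ξ).toReal) ∂μ : ℝ) : EReal) else ⊤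

/-- The randomized nonlocal operator `M^λ`. -/
def Mlam (l : ℝ → ℝ) (lam : ℝ) (φ : ℝ → ℝ) (x : ℝ) : EReal :=
  ⨅ μ : {μ : Measure ℝ // IsProbabilityMeasure μ ∧ μ ≪ Phi x},
    eInt (fun ξ => φ (x + ξ) + l ξ) μ.1 + (lam : EReal) * klDiv' μ.1 (Phi x)

/-- The classical nonlocal operator `M`. -/
def Mcl (l : ℝ → ℝ) (φ : ℝ → ℝ) (x : ℝ) : ℝ := ⨅ ξ : ℝ, (φ (x + ξ) + l ξ)

/-- `φ` is bounded from below. -/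
def BddBelowFun (φ : ℝ → ℝ) : Prop := ∃ m : ℝ, ∀ y, m ≤ φ y

/-- `φ` is of polynomial growth. -/
def PolyGrowth (φ : ℝ → ℝ) : Prop :=
  ∃ β : ℝ, 0 ≤ β ∧ ∃ C : ℝ, ∀ y : ℝ, |φ y| ≤ C * (1 + |y| ^ β)

/-- The standing hypotheses on the intervention cost `l`. -/
structure CostHyp (l : ℝ → ℝ) (K Ll : ℝ) : Prop where
  K_pos : 0 < K
  l_zero : l 0 = K
  l_lb : ∀ x, K ≤ l x
  l_subadd : ∀ x y, l (x + y) + K ≤ l x + l y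
  l_coercive : Filter.Tendsto l (Filter.cocompact ℝ) Filter.atTop
  Ll_pos : 0 < Ll
  l_lip : ∀ x y, |l x - l y| ≤ Ll * |x - y|


/-- A real-Lipschitz bound yields continuity. -/
lemma continuous_of_lip {L : ℝ} {f : ℝ → ℝ} (h : ∀ a b, |f a - f b| ≤ L * |a - b|) :
    Continuous f := by
  have : LipschitzWith (Real.toNNReal L) f := by
    refine LipschitzWith.of_dist_le_mul fun a b => ?_
    rw [Real.dist_eq, Real.dist_eq]
    refine (h a b).trans (mul_le_mul_of_nonneg_right ?_ (abs_nonneg _))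
    exact le_max_left _ _
  exact this.continuous

/-- Nonnegativity of relative entropy (Gibbs' inequality). -/
lemma kl_nonneg' (μ ν : Measure ℝ) [IsProbabilityMeasure μ] [IsProbabilityMeasure ν]
    (hμν : μ ≪ ν) (h : Integrable (llr μ ν) μ) : 0 ≤ ∫ ξ, llr μ ν ξ ∂μ := by
  have hr_meas : Measurable (μ.rnDeriv ν) := Measure.measurable_rnDeriv μ ν
  have h_pos : ∀ᵐ ξ ∂μ, 0 < μ.rnDeriv ν ξ := Measure.rnDeriv_pos hμν
  have h_fin : ∀ᵐ ξ ∂μ, μ.rnDeriv ν ξ < ⊤ := hμν.ae_le (μ.rnDeriv_lt_top ν)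
  have hle : ∫⁻ ξ, (μ.rnDeriv ν ξ)⁻¹ ∂μ ≤ 1 := by
    calc ∫⁻ ξ, (μ.rnDeriv ν ξ)⁻¹ ∂μ
        = ∫⁻ ξ, μ.rnDeriv ν ξ * (μ.rnDeriv ν ξ)⁻¹ ∂ν :=
          (lintegral_rnDeriv_mul hμν hr_meas.inv.aemeasurable).symm
      _ ≤ ∫⁻ _, 1 ∂ν := lintegral_mono fun ξ => ENNReal.mul_inv_le_one _
      _ = 1 := by simp
  have h_int_inv : Integrable (fun ξ => ((μ.rnDeriv ν ξ)⁻¹).toReal) μ :=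
    integrable_toReal_of_lintegral_ne_top hr_meas.inv.aemeasurable
      (ne_top_of_le_ne_top ENNReal.one_ne_top hle)
  have h_int_le : ∫ ξ, ((μ.rnDeriv ν ξ)⁻¹).toReal ∂μ ≤ 1 := by
    rw [integral_toReal (f := fun ξ => (μ.rnDeriv ν ξ)⁻¹) hr_meas.inv.aemeasurable
      (h_pos.mono fun ξ hξ => ENNReal.inv_lt_top.mpr hξ)]
    simpa using ENNReal.toReal_mono ENNReal.one_ne_top hle
  have key : ∀ᵐ ξ ∂μ, 1 - ((μ.rnDeriv ν ξ)⁻¹).toReal ≤ llr μ ν ξ := by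
    filter_upwards [h_pos, h_fin] with ξ hξ hξ'
    have hx0 : 0 < (μ.rnDeriv ν ξ).toReal := ENNReal.toReal_pos hξ.ne' hξ'.ne
    have hlog := Real.log_le_sub_one_of_pos (inv_pos.mpr hx0)
    rw [Real.log_inv] at hlog
    rw [ENNReal.toReal_inv]
    simp only [llr]
    linarith
  have hsub : Integrable (fun ξ => 1 - ((μ.rnDeriv ν ξ)⁻¹).toReal) μ := by
    exact (integrable_const (1:ℝ)).sub h_int_inv
  have hmono := integral_mono_ae hsub h key
  rw [integral_sub (integrable_const (1:ℝ)) h_int_inv] at hmono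
  simp only [integral_const, measure_univ, probReal_univ, ENNReal.toReal_one, smul_eq_mul, one_mul] at hmono
  linarith

/-- Bound for `|t| * exp (-t/λ)` on `[m₀, ∞)`. -/
lemma abs_mul_exp_bound (lam : ℝ) (hlam : 0 < lam) (m0 t : ℝ) (ht : m0 ≤ t) :
    |t| * Real.exp (-t / lam) ≤ (|m0| + lam) * Real.exp (|m0| / lam) := by
  have hexp1 : (1:ℝ) ≤ Real.exp (|m0| / lam) :=
    Real.one_le_exp (div_nonneg (abs_nonneg _) hlam.le)
  rcases le_or_gt t 0 with h | h
  · have h1 : |t| ≤ |m0| := by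
      rw [abs_of_nonpos h]
      calc -t ≤ -m0 := by linarith
        _ ≤ |m0| := neg_le_abs _
    have h2 : Real.exp (-t / lam) ≤ Real.exp (|m0| / lam) := by
      apply Real.exp_le_exp.mpr
      refine (div_le_div_iff_of_pos_right hlam).mpr ?_
      calc -t ≤ -m0 := by linarith
        _ ≤ |m0| := neg_le_abs _
    calc |t| * Real.exp (-t / lam) ≤ |m0| * Real.exp (|m0| / lam) :=
          mul_le_mul h1 h2 (Real.exp_pos _).le (abs_nonneg _)
      _ ≤ (|m0| + lam) * Real.exp (|m0| / lam) := by nlinarith [Real.exp_pos (|m0|/lam)]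
  · have hs : t / lam * Real.exp (-(t / lam)) ≤ 1 := by
      have h1 : t / lam ≤ Real.exp (t / lam) := by
        linarith [Real.add_one_le_exp (t / lam)]
      rw [Real.exp_neg]
      calc t / lam * (Real.exp (t / lam))⁻¹
          ≤ Real.exp (t / lam) * (Real.exp (t / lam))⁻¹ :=
            mul_le_mul_of_nonneg_right h1 (by positivity)
        _ = 1 := mul_inv_cancel₀ (Real.exp_pos _).ne'
    have ht' : |t| * Real.exp (-t / lam) = lam * (t / lam * Real.exp (-(t / lam))) := by
      rw [abs_of_pos h, neg_div]
      field_simp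
    rw [ht']
    calc lam * (t / lam * Real.exp (-(t / lam))) ≤ lam * 1 :=
          mul_le_mul_of_nonneg_left hs hlam.le
      _ = lam := mul_one lam
      _ ≤ (|m0| + lam) * Real.exp (|m0| / lam) := by nlinarith [abs_nonneg m0]

/-- for `φ` Lipschitz and bounded below,
`M^λφ(x) = −λ log ∫ exp(−(φ(x+ζ)+l(ζ))/λ) dΦ_x(ζ)`, the integral being a finite
positive real number. -/
theorem stmt_4 (l : ℝ → ℝ) (K Ll : ℝ) (hl : CostHyp l K Ll)
    (lam : ℝ) (hlam : 0 < lam)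
    (φ : ℝ → ℝ) (hφlip : ∃ Lφ : ℝ, ∀ a b, |φ a - φ b| ≤ Lφ * |a - b|)
    (hφb : BddBelowFun φ) (x : ℝ) :
    Integrable (fun ζ => Real.exp (-(φ (x + ζ) + l ζ) / lam)) (Phi x) ∧
    0 < ∫ ζ, Real.exp (-(φ (x + ζ) + l ζ) / lam) ∂(Phi x) ∧
    Mlam l lam φ x
      = ((-lam * Real.log (∫ ζ, Real.exp (-(φ (x + ζ) + l ζ) / lam) ∂(Phi x)) : ℝ) : EReal) := by
  
  obtain ⟨m, hm⟩ := hφb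
  set g : ℝ → ℝ := fun ζ => φ (x + ζ) + l ζ with hg_def
  set f : ℝ → ℝ := fun ζ => -(φ (x + ζ) + l ζ) / lam with hf_def
  obtain ⟨Lφ, hLφ⟩ := hφlip
  have hφc : Continuous φ := continuous_of_lip hLφ
  have hlc : Continuous l := continuous_of_lip hl.l_lip
  have hgc : Continuous g := (hφc.comp (continuous_const.add continuous_id)).add hlc
  have hfc : Continuous f := (hgc.neg).div_const lam
  set m0 : ℝ := m + K with hm0
  have hg_lb : ∀ ζ, m0 ≤ g ζ := fun ζ => add_le_add (hm _) (hl.l_lb ζ)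
  haveI : IsProbabilityMeasure (Phi x) := by unfold Phi; infer_instance
  have hfg : ∀ ζ, f ζ = -(g ζ) / lam := fun ζ => rfl
  -- integrability of exp(f)
  have h_exp_bdd : ∀ ζ, ‖Real.exp (f ζ)‖ ≤ Real.exp (-m0 / lam) := by
    intro ζ
    rw [Real.norm_eq_abs, abs_of_pos (Real.exp_pos _)]
    apply Real.exp_le_exp.mpr
    rw [hfg]
    exact (div_le_div_iff_of_pos_right hlam).mpr (by linarith [hg_lb ζ])
  have hint : Integrable (fun ζ => Real.exp (f ζ)) (Phi x) := by
    refine (integrable_const (Real.exp (-m0 / lam))).mono'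
      ((Real.continuous_exp.comp hfc).aestronglyMeasurable) (ae_of_all _ h_exp_bdd)
  set Z : ℝ := ∫ ζ, Real.exp (f ζ) ∂(Phi x) with hZ_def
  have hZpos : 0 < Z := integral_exp_pos hint
  refine ⟨hint, hZpos, ?_⟩
  -- the Gibbs measure
  set ρ : Measure ℝ := (Phi x).tilted f with hρ_def
  haveI hρprob : IsProbabilityMeasure ρ := isProbabilityMeasure_tilted hint
  have hρac : ρ ≪ Phi x := tilted_absolutelyContinuous _ _
  have hacρ : Phi x ≪ ρ := absolutelyContinuous_tilted hint
  -- integrability of g under ρ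
  set C : ℝ := (|m0| + lam) * Real.exp (|m0| / lam) with hC_def
  have hgbd : ∀ ζ, |g ζ * Real.exp (f ζ)| ≤ C := by
    intro ζ
    rw [abs_mul, abs_of_pos (Real.exp_pos _), hfg, neg_div]
    have := abs_mul_exp_bound lam hlam m0 (g ζ) (hg_lb ζ)
    rw [neg_div] at this
    exact this
  have hge : Integrable (fun ζ => g ζ * Real.exp (f ζ)) (Phi x) := by
    refine (integrable_const C).mono'
      ((hgc.mul (Real.continuous_exp.comp hfc)).aestronglyMeasurable) (ae_of_all _ ?_)
    intro ζ; rw [Real.norm_eq_abs]; exact hgbd ζ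
  have hgρ : Integrable g ρ := by
    rw [hρ_def, Measure.tilted]
    have hmeasd : Measurable (fun ζ => ENNReal.ofReal (Real.exp (f ζ) / Z)) :=
      ((Real.continuous_exp.comp hfc).measurable.div_const Z).ennreal_ofReal
    rw [integrable_withDensity_iff hmeasd (ae_of_all _ fun ζ => ENNReal.ofReal_lt_top)]
    have heq : (fun ζ => g ζ * (ENNReal.ofReal (Real.exp (f ζ) / Z)).toReal)
        = fun ζ => (g ζ * Real.exp (f ζ)) / Z := by
      funext ζ
      rw [ENNReal.toReal_ofReal (by positivity)]
      ring
    rw [heq]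
    exact hge.div_const Z
  have hfρ : Integrable f ρ := by
    have : f = fun ζ => (-(1:ℝ)/lam) * g ζ := by
      funext ζ; rw [hfg]; ring
    rw [this]
    exact hgρ.const_mul _
  -- the llr of ρ
  have hllr_eq : llr ρ (Phi x) =ᵐ[ρ] fun ζ => f ζ - Real.log Z :=
    hρac.ae_le (log_rnDeriv_tilted_left_self hint)
  have hllr_int : Integrable (llr ρ (Phi x)) ρ := by
    rw [integrable_congr hllr_eq]
    exact hfρ.sub (integrable_const _)
  have hllr_val : ∫ ζ, llr ρ (Phi x) ζ ∂ρ = -(∫ ζ, g ζ ∂ρ) / lam - Real.log Z := by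
    rw [integral_congr_ae hllr_eq, integral_sub hfρ (integrable_const _)]
    simp only [integral_const, measure_univ, probReal_univ, ENNReal.toReal_one, smul_eq_mul, one_mul]
    congr 1
    have : f = fun ζ => (-(1:ℝ)/lam) * g ζ := by
      funext ζ; rw [hfg]; ring
    rw [this, integral_const_mul]
    ring
  -- llr agrees with the klDiv' integrand
  have hllr_fun : ∀ (μ ν : Measure ℝ),
      (fun ξ => Real.log ((μ.rnDeriv ν ξ).toReal)) = llr μ ν := fun μ ν => rfl
  -- value of the functional at ρ
  have hval : eInt (fun ξ => φ (x + ξ) + l ξ) ρ + (lam : EReal) * klDiv' ρ (Phi x)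
      = ((-lam * Real.log Z : ℝ) : EReal) := by
    have h1 : eInt (fun ξ => φ (x + ξ) + l ξ) ρ = ((∫ ζ, g ζ ∂ρ : ℝ) : EReal) := by
      rw [eInt, if_pos hgρ]
    have h2 : klDiv' ρ (Phi x) = ((∫ ζ, llr ρ (Phi x) ζ ∂ρ : ℝ) : EReal) := by
      rw [klDiv', if_pos]
      · rfl
      · exact ⟨hρac, hllr_int⟩
    rw [h1, h2, hllr_val, ← EReal.coe_mul, ← EReal.coe_add]
    congr 1
    field_simp
    ring
  -- lower bound for every admissible measure
  have hbound : ∀ μ : {μ : Measure ℝ // IsProbabilityMeasure μ ∧ μ ≪ Phi x},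
      ((-lam * Real.log Z : ℝ) : EReal)
        ≤ eInt (fun ξ => φ (x + ξ) + l ξ) μ.1 + (lam : EReal) * klDiv' μ.1 (Phi x) := by
    rintro ⟨μ, hμprob, hμac⟩
    haveI := hμprob
    have h_eInt_ne_bot : eInt (fun ξ => φ (x + ξ) + l ξ) μ ≠ ⊥ := by
      rw [eInt]; split <;> simp
    by_cases h2 : Integrable (fun ξ => Real.log ((μ.rnDeriv (Phi x) ξ).toReal)) μ
    swap
    · have : klDiv' μ (Phi x) = ⊤ := by
        rw [klDiv', if_neg]; tauto
      rw [this, EReal.coe_mul_top_of_pos hlam, EReal.add_top_of_ne_bot h_eInt_ne_bot]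
      exact le_top
    by_cases h1 : Integrable (fun ξ => φ (x + ξ) + l ξ) μ
    swap
    · have : eInt (fun ξ => φ (x + ξ) + l ξ) μ = ⊤ := by rw [eInt, if_neg h1]
      rw [this]
      have hk : klDiv' μ (Phi x) = ((∫ ζ, llr μ (Phi x) ζ ∂μ : ℝ) : EReal) := by
        rw [klDiv', if_pos ⟨hμac, h2⟩]; rfl
      have hcm : (lam : EReal) * ((∫ ζ, llr μ (Phi x) ζ ∂μ : ℝ) : EReal)
          = ((lam * ∫ ζ, llr μ (Phi x) ζ ∂μ : ℝ) : EReal) := (EReal.coe_mul _ _).symm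
      rw [hk, hcm, EReal.top_add_of_ne_bot (EReal.coe_ne_bot _)]
      exact le_top
    -- main case
    have hgμ : Integrable g μ := h1
    have h2' : Integrable (llr μ (Phi x)) μ := h2
    have hfμ : Integrable f μ := by
      have : f = fun ζ => (-(1:ℝ)/lam) * g ζ := by
        funext ζ; rw [hfg]; ring
      rw [this]; exact hgμ.const_mul _
    have h_tilt := integral_llr_tilted_right hμac hfμ hint h2'
    have h_int_tilt := integrable_llr_tilted_right hμac hfμ h2' hint
    have hμρ : μ ≪ ρ := hμac.trans hacρ
    have h0 : 0 ≤ ∫ ζ, llr μ ρ ζ ∂μ := kl_nonneg' μ ρ hμρ h_int_tilt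
    rw [h_tilt] at h0
    have hfμ_val : ∫ ζ, f ζ ∂μ = -(∫ ζ, g ζ ∂μ) / lam := by
      have : f = fun ζ => (-(1:ℝ)/lam) * g ζ := by
        funext ζ; rw [hfg]; ring
      rw [this, integral_const_mul]; ring
    rw [hfμ_val] at h0
    have hreal : -lam * Real.log Z ≤ ∫ ζ, g ζ ∂μ + lam * ∫ ζ, llr μ (Phi x) ζ ∂μ := by
      have h3 : -(∫ ζ, g ζ ∂μ) / lam - Real.log Z ≤ ∫ ζ, llr μ (Phi x) ζ ∂μ := by
        linarith
      have h4 := mul_le_mul_of_nonneg_left h3 hlam.le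
      have h6 : lam * (-(∫ ζ, g ζ ∂μ) / lam - Real.log Z)
          = -(∫ ζ, g ζ ∂μ) - lam * Real.log Z := by
        field_simp
      linarith
    have hle : eInt (fun ξ => φ (x + ξ) + l ξ) μ = ((∫ ζ, g ζ ∂μ : ℝ) : EReal) := by
      rw [eInt, if_pos h1]
    have hk : klDiv' μ (Phi x) = ((∫ ζ, llr μ (Phi x) ζ ∂μ : ℝ) : EReal) := by
      rw [klDiv', if_pos ⟨hμac, h2⟩]; rfl
    rw [hle, hk, ← EReal.coe_mul, ← EReal.coe_add]
    exact_mod_cast hreal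
  -- conclusion
  rw [Mlam]
  refine le_antisymm ?_ (le_iInf hbound)
  exact iInf_le_of_le ⟨ρ, hρprob, hρac⟩ (le_of_eq hval)
end
end

section
/- Let λ > 0 and let φ: ℝ → ℝ be Lipschitz and bounded below. Then the function x ↦ M^λφ(x) is Lipschitz with constant L_l, i.e. |M^λφ(x) − M^λφ(y)| ≤ L_l·|x − y| for all x, y ∈ ℝ. -/
open MeasureTheory ProbabilityTheory Real Filter
open scoped Classical

noncomputable section

/-- A function with a Lipschitz-type bound is continuous. -/
lemma cont_of_lip {f : ℝ → ℝ} {L : ℝ} (h : ∀ a b, |f a - f b| ≤ L * |a - b|) :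
    Continuous f := by
  have : LipschitzWith ⟨max L 0, le_max_right _ _⟩ f := by
    apply LipschitzWith.of_dist_le_mul
    intro a b
    calc dist (f a) (f b) = |f a - f b| := Real.dist_eq _ _
      _ ≤ L * |a - b| := h a b
      _ ≤ max L 0 * |a - b| := by
          apply mul_le_mul_of_nonneg_right (le_max_left _ _) (abs_nonneg _)
      _ = ↑(⟨max L 0, le_max_right L 0⟩ : NNReal) * dist a b := by
          rw [Real.dist_eq]
  exact this.continuous

/-- for `φ` Lipschitz and bounded below, `x ↦ M^λφ(x)` is Lipschitz with
constant `L_l` (the absolute-value bound in `EReal` is expressed by the one-sided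
bound, which for all pairs `x, y` is equivalent). -/
theorem stmt_5 (l : ℝ → ℝ) (K Ll : ℝ) (hl : CostHyp l K Ll)
    (lam : ℝ) (hlam : 0 < lam)
    (φ : ℝ → ℝ) (hφlip : ∃ Lφ : ℝ, ∀ a b, |φ a - φ b| ≤ Lφ * |a - b|)
    (hφb : BddBelowFun φ) :
    ∀ x y : ℝ, Mlam l lam φ x ≤ Mlam l lam φ y + ((Ll * |x - y| : ℝ) : EReal) := by
  intro x y
  obtain ⟨Lφ, hφ⟩ := hφlip
  have hφc : Continuous φ := cont_of_lip hφ
  have hlc : Continuous l := cont_of_lip hl.l_lip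
  set C : ℝ := Ll * |x - y| with hC
  set c : ℝ := y - x with hc
  -- key step: for each admissible μ at y, Mlam x ≤ value(μ) + C
  have key : ∀ μ : {μ : Measure ℝ // IsProbabilityMeasure μ ∧ μ ≪ Phi y},
      Mlam l lam φ x ≤
        (eInt (fun ξ => φ (y + ξ) + l ξ) μ.1 + (lam : EReal) * klDiv' μ.1 (Phi y))
          + (C : EReal) := by
    rintro ⟨μ, hμprob, hμac⟩
    haveI : IsProbabilityMeasure (Phi x) := by unfold Phi; infer_instance
    haveI : IsProbabilityMeasure (Phi y) := by unfold Phi; infer_instance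
    have hfm : Measurable (fun ξ : ℝ => ξ + c) := measurable_id.add_const c
    have hfe : MeasurableEmbedding (fun ξ : ℝ => ξ + c) :=
      (Homeomorph.addRight c).measurableEmbedding
    set μ' : Measure ℝ := μ.map (fun ξ => ξ + c) with hμ'
    haveI : IsProbabilityMeasure μ := hμprob
    haveI hμ'prob : IsProbabilityMeasure μ' := Measure.isProbabilityMeasure_map hfm.aemeasurable
    have hmapPhi : (Phi y).map (fun ξ => ξ + c) = Phi x := by
      show (gaussianReal (-y) 1).map (· + c) = gaussianReal (-x) 1
      rw [gaussianReal_map_add_const]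
      congr 1
      rw [hc]; ring
    have hμ'ac : μ' ≪ Phi x := by
      rw [← hmapPhi]
      exact hμac.map hfm
    -- rnDeriv identity
    have hrn : (fun ξ => μ'.rnDeriv (Phi x) (ξ + c)) =ᵐ[μ] μ.rnDeriv (Phi y) := by
      have h1 : (fun ξ => (μ.map (fun ξ => ξ + c)).rnDeriv ((Phi y).map (fun ξ => ξ + c)) (ξ + c))
          =ᵐ[Phi y] μ.rnDeriv (Phi y) := hfe.rnDeriv_map μ (Phi y)
      rw [hmapPhi] at h1
      exact hμac.ae_le h1
    have hlogae : (fun ξ => Real.log ((μ'.rnDeriv (Phi x) (ξ + c)).toReal))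
        =ᵐ[μ] (fun ξ => Real.log ((μ.rnDeriv (Phi y) ξ).toReal)) := by
      filter_upwards [hrn] with ξ hξ
      rw [hξ]
    have hmeas' : Measurable (fun ξ => Real.log ((μ'.rnDeriv (Phi x) ξ).toReal)) :=
      Real.measurable_log.comp ((Measure.measurable_rnDeriv _ _).ennreal_toReal)
    -- KL divergence equality
    have hkl : klDiv' μ' (Phi x) = klDiv' μ (Phi y) := by
      have hint_iff : Integrable (fun ξ => Real.log ((μ'.rnDeriv (Phi x) ξ).toReal)) μ' ↔
          Integrable (fun ξ => Real.log ((μ.rnDeriv (Phi y) ξ).toReal)) μ := by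
        rw [hμ', integrable_map_measure hmeas'.aestronglyMeasurable hfm.aemeasurable]
        exact integrable_congr hlogae
      unfold klDiv'
      by_cases hI : Integrable (fun ξ => Real.log ((μ.rnDeriv (Phi y) ξ).toReal)) μ
      · rw [if_pos ⟨hμ'ac, hint_iff.mpr hI⟩, if_pos ⟨hμac, hI⟩]
        congr 1
        rw [hμ', integral_map hfm.aemeasurable hmeas'.aestronglyMeasurable]
        exact integral_congr_ae hlogae
      · rw [if_neg (by tauto), if_neg (by tauto)]
    -- integral part
    have hgm : Measurable (fun ξ => φ (x + ξ) + l ξ) :=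
      ((hφc.comp (continuous_const.add continuous_id)).add hlc).measurable
    have hcomp : (fun ξ : ℝ => φ (x + (ξ + c)) + l (ξ + c))
        = fun ξ => (φ (y + ξ) + l ξ) + (l (ξ + c) - l ξ) := by
      funext ξ
      have : x + (ξ + c) = y + ξ := by rw [hc]; ring
      rw [this]; ring
    have hdb : ∀ ξ : ℝ, |l (ξ + c) - l ξ| ≤ C := by
      intro ξ
      calc |l (ξ + c) - l ξ| ≤ Ll * |ξ + c - ξ| := hl.l_lip _ _
        _ = Ll * |x - y| := by
            congr 1
            rw [show ξ + c - ξ = c by ring, hc, abs_sub_comm]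
        _ = C := rfl
    have hdint : Integrable (fun ξ => l (ξ + c) - l ξ) μ := by
      refine Integrable.mono' (g := fun _ => C) (integrable_const C)
        ((hlc.comp (continuous_id.add continuous_const)).sub hlc).aestronglyMeasurable ?_
      exact Eventually.of_forall hdb
    have heInt : eInt (fun ξ => φ (x + ξ) + l ξ) μ' ≤
        eInt (fun ξ => φ (y + ξ) + l ξ) μ + (C : EReal) := by
      unfold eInt
      by_cases hI : Integrable (fun ξ => φ (y + ξ) + l ξ) μ
      · have hI' : Integrable (fun ξ => φ (x + ξ) + l ξ) μ' := by
          rw [hμ', integrable_map_measure hgm.aestronglyMeasurable hfm.aemeasurable]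
          show Integrable (fun ξ => φ (x + (ξ + c)) + l (ξ + c)) μ
          rw [hcomp]
          exact hI.add hdint
        rw [if_pos hI', if_pos hI, ← EReal.coe_add, EReal.coe_le_coe_iff]
        rw [hμ', integral_map hfm.aemeasurable hgm.aestronglyMeasurable]
        rw [show (fun ξ => φ (x + (ξ + c)) + l (ξ + c)) = fun ξ =>
          (φ (y + ξ) + l ξ) + (l (ξ + c) - l ξ) from hcomp, integral_add hI hdint]
        have : ∫ ξ, (l (ξ + c) - l ξ) ∂μ ≤ C := by
          calc ∫ ξ, (l (ξ + c) - l ξ) ∂μ ≤ ∫ _, C ∂μ :=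
                integral_mono hdint (integrable_const C)
                  (fun ξ => (abs_le.mp (hdb ξ)).2)
            _ = C := by simp
        linarith
      · rw [if_neg hI, EReal.top_add_coe]
        exact le_top
    -- combine
    calc Mlam l lam φ x
        ≤ eInt (fun ξ => φ (x + ξ) + l ξ) μ' + (lam : EReal) * klDiv' μ' (Phi x) :=
          iInf_le _ (⟨μ', hμ'prob, hμ'ac⟩ :
            {ν : Measure ℝ // IsProbabilityMeasure ν ∧ ν ≪ Phi x})
      _ ≤ (eInt (fun ξ => φ (y + ξ) + l ξ) μ + (C : EReal))
            + (lam : EReal) * klDiv' μ (Phi y) := by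
          rw [hkl]
          exact add_le_add_left heInt _
      _ = (eInt (fun ξ => φ (y + ξ) + l ξ) μ + (lam : EReal) * klDiv' μ (Phi y))
            + (C : EReal) := by
          rw [add_assoc, add_comm (C : EReal), add_assoc]
  -- conclude via subtraction trick
  have hsub : Mlam l lam φ x - (C : EReal) ≤ Mlam l lam φ y := by
    apply le_iInf
    intro μ
    rw [EReal.sub_le_iff_le_add (Or.inl (EReal.coe_ne_bot C)) (Or.inl (EReal.coe_ne_top C))]
    exact key μ
  rw [← EReal.sub_le_iff_le_add (Or.inl (EReal.coe_ne_bot C)) (Or.inl (EReal.coe_ne_top C))]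
  exact hsub
end
end

section
/- Let λ > 0 and let φ: ℝ → ℝ be Lipschitz with constant L_φ and bounded below. For x ∈ ℝ set Z(x) = ∫ exp(−(φ(x+ζ) + l(ζ))/λ) dΦ_x(ζ) and let μ_x be the probability measure on ℝ with density dμ_x/dΦ_x(ξ) = exp(−(φ(x+ξ) + l(ξ))/λ)/Z(x). Then there exist constants κ₁, κ₂ > 0, depending only on L_φ, L_l and λ (and not on x), such that for every x ∈ ℝ and every t ≥ 0, μ_x({ξ ∈ ℝ : |x + ξ| > t}) ≤ 2κ₁·exp(−κ₂ t²). -/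
open MeasureTheory ProbabilityTheory Real Filter
open scoped Classical

noncomputable section

/-- The Gibbs measure `μ_x` with density `dμ_x/dΦ_x(ξ) = exp(−(φ(x+ξ)+l(ξ))/λ)/Z(x)`,
where `Z(x) = ∫ exp(−(φ(x+ζ)+l(ζ))/λ) dΦ_x(ζ)`. -/
def gibbsMeasure (l : ℝ → ℝ) (lam : ℝ) (φ : ℝ → ℝ) (x : ℝ) : Measure ℝ :=
  (Phi x).withDensity fun ξ =>
    ENNReal.ofReal (Real.exp (-(φ (x + ξ) + l ξ) / lam) /
      ∫ ζ, Real.exp (-(φ (x + ζ) + l ζ) / lam) ∂(Phi x))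


lemma aux_cont_of_lip {f : ℝ → ℝ} {L : ℝ} (hf : ∀ a b, |f a - f b| ≤ L * |a - b|) :
    Continuous f := by
  have : LipschitzWith (Real.toNNReal L) f := by
    apply LipschitzWith.of_dist_le_mul
    intro a b
    rw [Real.dist_eq, Real.dist_eq]
    exact (hf a b).trans (mul_le_mul_of_nonneg_right (Real.le_coe_toNNReal L) (abs_nonneg _))
  exact this.continuous

lemma aux_integral_pos {f : ℝ → ℝ} (hpos : ∀ u, 0 < f u) (hint : Integrable f) :
    0 < ∫ u, f u := by
  rw [integral_pos_iff_support_of_nonneg (fun u => (hpos u).le) hint]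
  have : Function.support f = Set.univ := Set.eq_univ_of_forall fun u => (hpos u).ne'
  rw [this]
  simp

lemma aux_int_D {b : ℝ} (hb : 0 ≤ b) :
    Integrable (fun u : ℝ => Real.exp (-b * |u| - u ^ 2 / 2)) := by
  have hc : Continuous fun u : ℝ => Real.exp (-b * |u| - u ^ 2 / 2) := by
    apply Real.continuous_exp.comp
    exact (continuous_const.mul continuous_abs).sub ((continuous_pow 2).div_const 2)
  apply (integrable_exp_neg_mul_sq (by norm_num : (0:ℝ) < 1/2)).mono' hc.aestronglyMeasurable
  refine ae_of_all _ fun u => ?_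
  rw [Real.norm_eq_abs, abs_of_pos (Real.exp_pos _)]
  apply Real.exp_le_exp.mpr
  nlinarith [abs_nonneg u, mul_nonneg hb (abs_nonneg u)]

/-- sub-Gaussian tail bound for the Gibbs measures `μ_x`, with constants
depending only on `L_φ`, `L_l` and `λ` (not on `x`). -/
theorem stmt_7 (l : ℝ → ℝ) (K Ll : ℝ) (hl : CostHyp l K Ll)
    (lam : ℝ) (hlam : 0 < lam) (Lφ : ℝ)
    (φ : ℝ → ℝ) (hφlip : ∀ a b, |φ a - φ b| ≤ Lφ * |a - b|) (hφb : BddBelowFun φ) :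
    ∃ κ₁ κ₂ : ℝ, 0 < κ₁ ∧ 0 < κ₂ ∧
      ∀ x t : ℝ, 0 ≤ t →
        gibbsMeasure l lam φ x {ξ : ℝ | t < |x + ξ|}
          ≤ ENNReal.ofReal (2 * κ₁ * Real.exp (-κ₂ * t ^ 2)) := by
  classical
  have hLphi : 0 ≤ Lφ := by
    have h : |φ 1 - φ 0| ≤ Lφ := by simpa using hφlip 1 0
    linarith [abs_nonneg (φ 1 - φ 0)]
  have hLl := hl.Ll_pos
  set b : ℝ := (Lφ + Ll) / lam with hbdef
  have hb : 0 ≤ b := div_nonneg (by linarith) hlam.le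
  set D : ℝ := ∫ u : ℝ, Real.exp (-b * |u| - u ^ 2 / 2) with hDdef
  set G : ℝ := ∫ u : ℝ, Real.exp (-(1/8) * u ^ 2) with hGdef
  have hDint := aux_int_D hb
  have hGint : Integrable (fun u : ℝ => Real.exp (-(1/8) * u ^ 2)) :=
    integrable_exp_neg_mul_sq (by norm_num)
  have hD : 0 < D := aux_integral_pos (fun u => Real.exp_pos _) hDint
  have hG : 0 < G := aux_integral_pos (fun u => Real.exp_pos _) hGint
  have hGofReal : ∫⁻ u : ℝ, ENNReal.ofReal (Real.exp (-(1/8) * u ^ 2)) = ENNReal.ofReal G :=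
    (ofReal_integral_eq_lintegral_ofReal hGint (ae_of_all _ fun u => (Real.exp_pos _).le)).symm
  have hDofReal : ∫⁻ u : ℝ, ENNReal.ofReal (Real.exp (-b * |u| - u ^ 2 / 2)) = ENNReal.ofReal D :=
    (ofReal_integral_eq_lintegral_ofReal hDint (ae_of_all _ fun u => (Real.exp_pos _).le)).symm
  refine ⟨Real.exp (b ^ 2) * G / D, 1/8, by positivity, by norm_num, ?_⟩
  intro x t ht
  have hpi := Real.pi_pos
  set c0 : ℝ := (Real.sqrt (2 * π))⁻¹ with hc0def
  have hc0 : 0 < c0 := by rw [hc0def]; positivity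
  set Cx : ℝ := Real.exp (-(φ 0 + l (-x)) / lam) with hCxdef
  have hCx : 0 < Cx := Real.exp_pos _
  have hφc : Continuous φ := aux_cont_of_lip hφlip
  have hlc : Continuous l := aux_cont_of_lip hl.l_lip
  have he_cont : Continuous fun ξ : ℝ => Real.exp (-(φ (x + ξ) + l ξ) / lam) := by
    apply Real.continuous_exp.comp
    exact (((hφc.comp (continuous_const.add continuous_id)).add hlc).neg).div_const lam
  have he_meas : Measurable fun ξ : ℝ => ENNReal.ofReal (Real.exp (-(φ (x + ξ) + l ξ) / lam)) :=
    he_cont.measurable.ennreal_ofReal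
  have harg : ∀ ξ : ℝ,
      -(φ 0 + l (-x)) / lam - b * |x + ξ| ≤ -(φ (x + ξ) + l ξ) / lam ∧
      -(φ (x + ξ) + l ξ) / lam ≤ -(φ 0 + l (-x)) / lam + b * |x + ξ| := by
    intro ξ
    have h1 := abs_le.mp (by simpa using hφlip (x + ξ) 0)
    have h2 : |l ξ - l (-x)| ≤ Ll * |x + ξ| := by
      have h := hl.l_lip ξ (-x)
      have habs : |ξ - -x| = |x + ξ| := by rw [sub_neg_eq_add, add_comm]
      rwa [habs] at h
    have h2' := abs_le.mp h2
    constructor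
    · have h3 : -(φ 0 + l (-x)) - (Lφ + Ll) * |x + ξ| ≤ -(φ (x + ξ) + l ξ) := by nlinarith
      calc -(φ 0 + l (-x)) / lam - b * |x + ξ|
          = (-(φ 0 + l (-x)) - (Lφ + Ll) * |x + ξ|) / lam := by rw [hbdef]; ring
        _ ≤ -(φ (x + ξ) + l ξ) / lam := (div_le_div_iff_of_pos_right hlam).mpr h3
    · have h3 : -(φ (x + ξ) + l ξ) ≤ -(φ 0 + l (-x)) + (Lφ + Ll) * |x + ξ| := by nlinarith
      calc -(φ (x + ξ) + l ξ) / lam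
          ≤ (-(φ 0 + l (-x)) + (Lφ + Ll) * |x + ξ|) / lam := (div_le_div_iff_of_pos_right hlam).mpr h3
        _ = -(φ 0 + l (-x)) / lam + b * |x + ξ| := by rw [hbdef]; ring
  have keyU : ∀ ξ : ℝ, Real.exp (-(φ (x + ξ) + l ξ) / lam) ≤ Cx * Real.exp (b * |x + ξ|) := by
    intro ξ
    rw [hCxdef, ← Real.exp_add]
    exact Real.exp_le_exp.mpr (harg ξ).2
  have keyL : ∀ ξ : ℝ, Cx * Real.exp (-(b * |x + ξ|)) ≤ Real.exp (-(φ (x + ξ) + l ξ) / lam) := by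
    intro ξ
    rw [hCxdef, ← Real.exp_add]
    apply Real.exp_le_exp.mpr
    have := (harg ξ).1
    linarith
  have hPhi : Phi x = volume.withDensity (gaussianPDF (-x) 1) :=
    gaussianReal_of_var_ne_zero _ one_ne_zero
  have hpdfR : ∀ ξ : ℝ, gaussianPDFReal (-x) 1 ξ = c0 * Real.exp (-(x + ξ) ^ 2 / 2) := by
    intro ξ
    simp only [gaussianPDFReal, NNReal.coe_one, mul_one]
    rw [hc0def, show ξ - -x = x + ξ by ring]
  set Z : ℝ := ∫ ζ, Real.exp (-(φ (x + ζ) + l ζ) / lam) ∂(Phi x) with hZdef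
  have hexpb_int : Integrable (fun ξ : ℝ => Real.exp (b * |x + ξ|)) (Phi x) := by
    rw [hPhi, integrable_withDensity_iff (measurable_gaussianPDF _ _)
      (ae_of_all _ fun ξ => ENNReal.ofReal_lt_top)]
    have hfun : (fun ξ : ℝ => Real.exp (b * |x + ξ|) * (gaussianPDF (-x) 1 ξ).toReal)
        = fun ξ : ℝ => Real.exp (b * |x + ξ|) * (c0 * Real.exp (-(x + ξ) ^ 2 / 2)) := by
      funext ξ
      rw [gaussianPDF, ENNReal.toReal_ofReal (gaussianPDFReal_nonneg _ _ _), hpdfR ξ]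
    rw [hfun]
    have h0 : Integrable (fun u : ℝ => Real.exp (-(1/4) * u ^ 2)) :=
      integrable_exp_neg_mul_sq (by norm_num)
    have hint2 : Integrable
        (fun ξ : ℝ => (c0 * Real.exp (b ^ 2)) * Real.exp (-(1/4) * (ξ + x) ^ 2)) := by
      apply Integrable.const_mul
      exact ((measurePreserving_add_right volume x).integrable_comp
        h0.aestronglyMeasurable).mpr h0
    apply hint2.mono'
    · apply Continuous.aestronglyMeasurable
      apply Continuous.mul
      · exact Real.continuous_exp.comp
          (continuous_const.mul (continuous_const.add continuous_id).abs)
      · exact continuous_const.mul (Real.continuous_exp.comp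
          (((continuous_const.add continuous_id).pow 2).neg.div_const 2))
    · refine ae_of_all _ fun ξ => ?_
      rw [Real.norm_eq_abs, abs_of_pos (by positivity)]
      have hh : Real.exp (b * |x + ξ|) * Real.exp (-(x + ξ) ^ 2 / 2)
          ≤ Real.exp (b ^ 2) * Real.exp (-(1/4) * (ξ + x) ^ 2) := by
        rw [← Real.exp_add, ← Real.exp_add]
        apply Real.exp_le_exp.mpr
        nlinarith [sq_nonneg (b - |x + ξ| / 2), sq_abs (x + ξ)]
      calc Real.exp (b * |x + ξ|) * (c0 * Real.exp (-(x + ξ) ^ 2 / 2))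
          = c0 * (Real.exp (b * |x + ξ|) * Real.exp (-(x + ξ) ^ 2 / 2)) := by ring
        _ ≤ c0 * (Real.exp (b ^ 2) * Real.exp (-(1/4) * (ξ + x) ^ 2)) :=
            mul_le_mul_of_nonneg_left hh hc0.le
        _ = (c0 * Real.exp (b ^ 2)) * Real.exp (-(1/4) * (ξ + x) ^ 2) := by ring
  have he_int : Integrable (fun ξ : ℝ => Real.exp (-(φ (x + ξ) + l ξ) / lam)) (Phi x) := by
    apply (hexpb_int.const_mul Cx).mono' he_cont.aestronglyMeasurable
    refine ae_of_all _ fun ξ => ?_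
    rw [Real.norm_eq_abs, abs_of_pos (Real.exp_pos _)]
    exact keyU ξ
  have hZofReal : ENNReal.ofReal Z
      = ∫⁻ ξ, ENNReal.ofReal (Real.exp (-(φ (x + ξ) + l ξ) / lam)) ∂(Phi x) := by
    rw [hZdef]
    exact ofReal_integral_eq_lintegral_ofReal he_int (ae_of_all _ fun ξ => (Real.exp_pos _).le)
  have hconstD : ∫⁻ u : ℝ, ENNReal.ofReal (Cx * c0 * Real.exp (-b * |u| - u ^ 2 / 2)) ∂volume
      = ENNReal.ofReal (Cx * c0 * D) := by
    simp_rw [ENNReal.ofReal_mul (show (0:ℝ) ≤ Cx * c0 by positivity)]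
    rw [lintegral_const_mul' _ _ ENNReal.ofReal_ne_top, hDofReal]
  have hZlb : ENNReal.ofReal (Cx * c0 * D) ≤ ENNReal.ofReal Z := by
    rw [hZofReal, hPhi, lintegral_withDensity_eq_lintegral_mul _
      (measurable_gaussianPDF _ _) he_meas]
    have step : ∀ ξ : ℝ, ENNReal.ofReal (Cx * c0 * Real.exp (-b * |ξ + x| - (ξ + x) ^ 2 / 2))
        ≤ (gaussianPDF (-x) 1 * fun ξ =>
            ENNReal.ofReal (Real.exp (-(φ (x + ξ) + l ξ) / lam))) ξ := by
      intro ξ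
      simp only [Pi.mul_apply, gaussianPDF]
      rw [← ENNReal.ofReal_mul (gaussianPDFReal_nonneg _ _ _)]
      apply ENNReal.ofReal_le_ofReal
      rw [hpdfR ξ]
      have heq : Cx * c0 * Real.exp (-b * |ξ + x| - (ξ + x) ^ 2 / 2)
          = (c0 * Real.exp (-(x + ξ) ^ 2 / 2)) * (Cx * Real.exp (-(b * |x + ξ|))) := by
        rw [show ξ + x = x + ξ by ring,
          show -b * |x + ξ| - (x + ξ) ^ 2 / 2
            = (-(x + ξ) ^ 2 / 2) + (-(b * |x + ξ|)) by ring, Real.exp_add]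
        ring
      rw [heq, mul_comm (c0 * Real.exp (-(x + ξ) ^ 2 / 2)) (Cx * Real.exp (-(b * |x + ξ|))),
        mul_comm (c0 * Real.exp (-(x + ξ) ^ 2 / 2))
          (Real.exp (-(φ (x + ξ) + l ξ) / lam))]
      exact mul_le_mul_of_nonneg_right (keyL ξ) (by positivity)
    calc ENNReal.ofReal (Cx * c0 * D)
        = ∫⁻ u : ℝ, ENNReal.ofReal (Cx * c0 * Real.exp (-b * |u| - u ^ 2 / 2)) ∂volume :=
          hconstD.symm
      _ = ∫⁻ ξ : ℝ, ENNReal.ofReal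
            (Cx * c0 * Real.exp (-b * |ξ + x| - (ξ + x) ^ 2 / 2)) ∂volume :=
          (lintegral_add_right_eq_self
            (fun u : ℝ => ENNReal.ofReal (Cx * c0 * Real.exp (-b * |u| - u ^ 2 / 2))) x).symm
      _ ≤ _ := lintegral_mono step
  have hZpos : 0 < Z :=
    ENNReal.ofReal_pos.mp (lt_of_lt_of_le (ENNReal.ofReal_pos.mpr (by positivity)) hZlb)
  have hS : MeasurableSet {ξ : ℝ | t < |x + ξ|} :=
    measurableSet_lt measurable_const ((continuous_const.add continuous_id).abs.measurable)
  have hM : gibbsMeasure l lam φ x {ξ : ℝ | t < |x + ξ|}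
      = ∫⁻ ξ in {ξ : ℝ | t < |x + ξ|},
          ENNReal.ofReal (Real.exp (-(φ (x + ξ) + l ξ) / lam) / Z) ∂(Phi x) := by
    rw [gibbsMeasure, withDensity_apply _ hS, ← hZdef]
  have hsplit : ∀ ξ : ℝ, ENNReal.ofReal (Real.exp (-(φ (x + ξ) + l ξ) / lam) / Z)
      = ENNReal.ofReal (Real.exp (-(φ (x + ξ) + l ξ) / lam)) * (ENNReal.ofReal Z)⁻¹ := by
    intro ξ
    rw [ENNReal.ofReal_div_of_pos hZpos, div_eq_mul_inv]
  have hM2 : gibbsMeasure l lam φ x {ξ : ℝ | t < |x + ξ|}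
      = (∫⁻ ξ in {ξ : ℝ | t < |x + ξ|},
          ENNReal.ofReal (Real.exp (-(φ (x + ξ) + l ξ) / lam)) ∂(Phi x))
        * (ENNReal.ofReal Z)⁻¹ := by
    rw [hM]
    simp_rw [hsplit]
    exact lintegral_mul_const' _ _ (ENNReal.inv_ne_top.mpr (ENNReal.ofReal_pos.mpr hZpos).ne')
  set A : ℝ := Cx * c0 * (Real.exp (b ^ 2) * Real.exp (-(1/8) * t ^ 2)) with hAdef
  have hA : 0 < A := by rw [hAdef]; positivity
  have hconstG : ∫⁻ ξ : ℝ, ENNReal.ofReal (A * Real.exp (-(1/8) * (ξ + x) ^ 2)) ∂volume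
      = ENNReal.ofReal (A * G) := by
    simp_rw [ENNReal.ofReal_mul hA.le]
    rw [lintegral_const_mul' _ _ ENNReal.ofReal_ne_top]
    congr 1
    calc ∫⁻ ξ : ℝ, ENNReal.ofReal (Real.exp (-(1/8) * (ξ + x) ^ 2)) ∂volume
        = ∫⁻ u : ℝ, ENNReal.ofReal (Real.exp (-(1/8) * u ^ 2)) ∂volume :=
          lintegral_add_right_eq_self
            (fun u : ℝ => ENNReal.ofReal (Real.exp (-(1/8) * u ^ 2))) x
      _ = ENNReal.ofReal G := hGofReal
  have hNum : ∫⁻ ξ in {ξ : ℝ | t < |x + ξ|},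
      ENNReal.ofReal (Real.exp (-(φ (x + ξ) + l ξ) / lam)) ∂(Phi x)
      ≤ ENNReal.ofReal (A * G) := by
    rw [hPhi, restrict_withDensity hS, lintegral_withDensity_eq_lintegral_mul _
      (measurable_gaussianPDF _ _) he_meas, ← lintegral_indicator hS _]
    rw [← hconstG]
    apply lintegral_mono
    intro ξ
    by_cases hmem : ξ ∈ {ξ : ℝ | t < |x + ξ|}
    · rw [Set.indicator_of_mem hmem]
      simp only [Pi.mul_apply, gaussianPDF]
      rw [← ENNReal.ofReal_mul (gaussianPDFReal_nonneg _ _ _)]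
      apply ENNReal.ofReal_le_ofReal
      rw [hpdfR ξ]
      have hm : t < |x + ξ| := hmem
      have ht2 : t ^ 2 ≤ (x + ξ) ^ 2 := by
        nlinarith [sq_abs (x + ξ), abs_nonneg (x + ξ)]
      have hexp : Real.exp (-(x + ξ) ^ 2 / 2) * Real.exp (b * |x + ξ|)
          ≤ Real.exp (b ^ 2) * Real.exp (-(1/8) * t ^ 2) * Real.exp (-(1/8) * (ξ + x) ^ 2) := by
        rw [← Real.exp_add, ← Real.exp_add, ← Real.exp_add]
        apply Real.exp_le_exp.mpr
        nlinarith [sq_nonneg (b - |x + ξ| / 2), sq_abs (x + ξ)]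
      calc c0 * Real.exp (-(x + ξ) ^ 2 / 2) * Real.exp (-(φ (x + ξ) + l ξ) / lam)
          ≤ c0 * Real.exp (-(x + ξ) ^ 2 / 2) * (Cx * Real.exp (b * |x + ξ|)) :=
            mul_le_mul_of_nonneg_left (keyU ξ) (by positivity)
        _ = (Cx * c0) * (Real.exp (-(x + ξ) ^ 2 / 2) * Real.exp (b * |x + ξ|)) := by ring
        _ ≤ (Cx * c0) * (Real.exp (b ^ 2) * Real.exp (-(1/8) * t ^ 2)
              * Real.exp (-(1/8) * (ξ + x) ^ 2)) :=
            mul_le_mul_of_nonneg_left hexp (by positivity)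
        _ = A * Real.exp (-(1/8) * (ξ + x) ^ 2) := by rw [hAdef]; ring
    · rw [Set.indicator_of_notMem hmem]
      exact zero_le
  clear_value b D G c0 Cx Z A
  calc gibbsMeasure l lam φ x {ξ : ℝ | t < |x + ξ|}
      = (∫⁻ ξ in {ξ : ℝ | t < |x + ξ|},
          ENNReal.ofReal (Real.exp (-(φ (x + ξ) + l ξ) / lam)) ∂(Phi x))
        * (ENNReal.ofReal Z)⁻¹ := hM2
    _ ≤ ENNReal.ofReal (A * G) * (ENNReal.ofReal (Cx * c0 * D))⁻¹ :=
        mul_le_mul' hNum (ENNReal.inv_le_inv' hZlb)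
    _ = ENNReal.ofReal (A * G * (Cx * c0 * D)⁻¹) := by
        rw [← ENNReal.ofReal_inv_of_pos (mul_pos (mul_pos hCx hc0) hD),
          ← ENNReal.ofReal_mul (mul_nonneg hA.le hG.le)]
    _ ≤ ENNReal.ofReal (2 * (Real.exp (b ^ 2) * G / D) * Real.exp (-(1/8) * t ^ 2)) := by
        apply ENNReal.ofReal_le_ofReal
        have hEq : A * G * (Cx * c0 * D)⁻¹
            = Real.exp (b ^ 2) * G / D * Real.exp (-(1/8) * t ^ 2) := by
          have h1 : Cx * Cx⁻¹ = 1 := mul_inv_cancel₀ hCx.ne'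
          have h2 : c0 * c0⁻¹ = 1 := mul_inv_cancel₀ hc0.ne'
          rw [hAdef, mul_inv, mul_inv, div_eq_mul_inv]
          calc Cx * c0 * (Real.exp (b ^ 2) * Real.exp (-(1/8) * t ^ 2)) * G
                * (Cx⁻¹ * c0⁻¹ * D⁻¹)
              = (Cx * Cx⁻¹) * ((c0 * c0⁻¹)
                * (Real.exp (b ^ 2) * G * D⁻¹ * Real.exp (-(1/8) * t ^ 2))) := by ring
            _ = Real.exp (b ^ 2) * G * D⁻¹ * Real.exp (-(1/8) * t ^ 2) := by
                rw [h1, h2]; ring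
        rw [hEq]
        have hX : 0 ≤ Real.exp (b ^ 2) * G / D * Real.exp (-(1/8) * t ^ 2) :=
          mul_nonneg (div_nonneg (mul_nonneg (Real.exp_pos _).le hG.le) hD.le)
            (Real.exp_pos _).le
        linarith
end
end

section
/- Let φ: ℝ → ℝ be Lipschitz and bounded below. Then for every x ∈ ℝ and every real u > Mφ(x) there exists λ₀ > 0 such that M^{λ₀}φ(x) ≤ u. Consequently, for every x ∈ ℝ, M^λφ(x) → Mφ(x) as λ → 0⁺. -/
open MeasureTheory ProbabilityTheory Real Filter
open scoped Classical ENNReal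

noncomputable section

set_option maxHeartbeats 1000000

lemma gibbs_nonneg {μ ν : Measure ℝ} [IsProbabilityMeasure μ] [IsProbabilityMeasure ν]
    (hac : μ ≪ ν) (hint : Integrable (fun ξ => Real.log ((μ.rnDeriv ν ξ).toReal)) μ) :
    0 ≤ ∫ ξ, Real.log ((μ.rnDeriv ν ξ).toReal) ∂μ := by
  set g := μ.rnDeriv ν with hg
  have hgm : Measurable g := Measure.measurable_rnDeriv μ ν
  have hpos : ∀ᵐ ξ ∂μ, 0 < g ξ := Measure.rnDeriv_pos hac
  have hlt : ∀ᵐ ξ ∂μ, g ξ < ∞ := hac.ae_le (Measure.rnDeriv_lt_top μ ν)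
  have hwd : ν.withDensity g = μ := Measure.withDensity_rnDeriv_eq μ ν hac
  have hlint : ∫⁻ ξ, (g ξ)⁻¹ ∂μ ≤ 1 := by
    rw [← hwd, lintegral_withDensity_eq_lintegral_mul ν hgm (g := fun ξ => (g ξ)⁻¹) hgm.inv]
    calc ∫⁻ ξ, (g * fun a => (g a)⁻¹) ξ ∂ν ≤ ∫⁻ _, 1 ∂ν := by
          refine lintegral_mono fun ξ => ?_
          rcases eq_or_ne (g ξ) 0 with h | h
          · simp [h]
          rcases eq_or_ne (g ξ) ∞ with h' | h'
          · simp [h']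
          · simp [Pi.mul_apply, ENNReal.mul_inv_cancel h h']
      _ = 1 := by simp
  have hlint' : ∫⁻ ξ, (g ξ)⁻¹ ∂μ ≠ ∞ := (hlint.trans_lt (by norm_num)).ne
  have hinv_int : Integrable (fun ξ => ((g ξ).toReal)⁻¹) μ := by
    have := integrable_toReal_of_lintegral_ne_top hgm.inv.aemeasurable hlint'
    simpa [ENNReal.toReal_inv] using this
  have hinv_le : ∫ ξ, ((g ξ).toReal)⁻¹ ∂μ ≤ 1 := by
    have h1 : ∫ ξ, ((g ξ)⁻¹).toReal ∂μ = (∫⁻ ξ, (g ξ)⁻¹ ∂μ).toReal :=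
      integral_toReal hgm.inv.aemeasurable (hpos.mono fun ξ h => by
        simpa [ENNReal.inv_lt_top] using h)
    have h2 : (∫⁻ ξ, (g ξ)⁻¹ ∂μ).toReal ≤ (1 : ℝ≥0∞).toReal :=
      ENNReal.toReal_mono (by norm_num) hlint
    simp only [ENNReal.toReal_inv] at h1
    rw [h1]; simpa using h2
  have hptw : ∀ᵐ ξ ∂μ, 1 - ((g ξ).toReal)⁻¹ ≤ Real.log ((g ξ).toReal) := by
    filter_upwards [hpos, hlt] with ξ h0 h1
    have ht : 0 < (g ξ).toReal := ENNReal.toReal_pos h0.ne' h1.ne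
    have h2 := Real.log_le_sub_one_of_pos (inv_pos.2 ht)
    rw [Real.log_inv] at h2
    linarith
  have hmono := integral_mono_ae ((integrable_const (1:ℝ)).sub hinv_int) hint hptw
  simp only [Pi.sub_apply] at hmono
  rw [integral_sub (integrable_const (1:ℝ)) hinv_int, integral_const] at hmono
  simp only [probReal_univ, smul_eq_mul, one_mul] at hmono
  linarith

lemma klDiv'_nonneg (μ ν : Measure ℝ) [IsProbabilityMeasure μ] [IsProbabilityMeasure ν] :
    (0 : EReal) ≤ klDiv' μ ν := by
  unfold klDiv'
  split_ifs with h
  · exact_mod_cast gibbs_nonneg h.1 h.2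
  · exact le_top

lemma klDiv'_ne_bot (μ ν : Measure ℝ) : klDiv' μ ν ≠ ⊥ := by
  unfold klDiv'; split_ifs <;> simp

lemma ereal_mul_nonneg' {lam : ℝ} (hlam : 0 ≤ lam) {k : EReal} (hk : 0 ≤ k) :
    (0 : EReal) ≤ (lam : EReal) * k := by
  induction k using EReal.rec with
  | bot => exact absurd hk (by simp)
  | coe r =>
      rw [← EReal.coe_mul]
      exact_mod_cast mul_nonneg hlam (by exact_mod_cast hk)
  | top =>
      rcases eq_or_lt_of_le hlam with h | h
      · simp [← h]
      · rw [EReal.coe_mul_top_of_pos h]; exact le_top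

lemma ereal_mul_mono' {lam lam' : ℝ} (h0 : 0 < lam) (hle : lam ≤ lam') {k : EReal}
    (hk : 0 ≤ k) (hkb : k ≠ ⊥) : (lam : EReal) * k ≤ (lam' : EReal) * k := by
  induction k using EReal.rec with
  | bot => exact absurd rfl hkb
  | coe r =>
      rw [← EReal.coe_mul, ← EReal.coe_mul, EReal.coe_le_coe_iff]
      exact mul_le_mul_of_nonneg_right hle (by exact_mod_cast hk)
  | top =>
      rw [EReal.coe_mul_top_of_pos h0, EReal.coe_mul_top_of_pos (h0.trans_le hle)]

/-- for every `x` and every `u > Mφ(x)` there is `λ₀ > 0` with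
`M^{λ₀}φ(x) ≤ u`; consequently `M^λφ(x) → Mφ(x)` as `λ → 0⁺`. -/
theorem stmt_12 (l : ℝ → ℝ) (K Ll : ℝ) (hl : CostHyp l K Ll)
    (φ : ℝ → ℝ) (hφlip : ∃ Lφ : ℝ, ∀ a b, |φ a - φ b| ≤ Lφ * |a - b|)
    (hφb : BddBelowFun φ) :
    (∀ x u : ℝ, Mcl l φ x < u → ∃ lam₀ : ℝ, 0 < lam₀ ∧ Mlam l lam₀ φ x ≤ (u : EReal)) ∧
    (∀ x : ℝ, Filter.Tendsto (fun lam : ℝ => Mlam l lam φ x)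
      (nhdsWithin 0 (Set.Ioi 0)) (nhds ((Mcl l φ x : ℝ) : EReal))) := by
  obtain ⟨Lφ, hφ⟩ := hφlip
  obtain ⟨m, hm⟩ := hφb
  have hLφ0 : 0 ≤ Lφ := by
    have h01 := hφ 0 1
    rw [show |(0:ℝ) - 1| = 1 by norm_num, mul_one] at h01
    linarith [abs_nonneg (φ 0 - φ 1)]
  have hφc : Continuous φ := by
    have h : LipschitzWith (Real.toNNReal Lφ) φ := by
      apply LipschitzWith.of_dist_le_mul
      intro a b
      rw [Real.dist_eq, Real.dist_eq, Real.coe_toNNReal _ hLφ0]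
      exact hφ a b
    exact h.continuous
  have hlc : Continuous l := by
    have h : LipschitzWith (Real.toNNReal Ll) l := by
      apply LipschitzWith.of_dist_le_mul
      intro a b
      rw [Real.dist_eq, Real.dist_eq, Real.coe_toNNReal _ hl.Ll_pos.le]
      exact hl.l_lip a b
    exact h.continuous
  have hPx : ∀ x : ℝ, IsProbabilityMeasure (Phi x) := fun x => by
    unfold Phi; infer_instance
  have hbdd : ∀ x : ℝ, BddBelow (Set.range fun ξ : ℝ => φ (x + ξ) + l ξ) := fun x =>
    ⟨m + K, by rintro _ ⟨ξ, rfl⟩; exact add_le_add (hm _) (hl.l_lb ξ)⟩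
  have hMcl_le : ∀ x ξ : ℝ, Mcl l φ x ≤ φ (x + ξ) + l ξ := fun x ξ =>
    ciInf_le (hbdd x) ξ
  -- lower bound
  have lb : ∀ x : ℝ, ∀ lam : ℝ, 0 < lam → ((Mcl l φ x : ℝ) : EReal) ≤ Mlam l lam φ x := by
    intro x lam hlam
    haveI := hPx x
    refine le_iInf fun μ => ?_
    haveI := μ.2.1
    have hk0 : (0:EReal) ≤ klDiv' μ.1 (Phi x) := klDiv'_nonneg _ _
    have hm0 : (0:EReal) ≤ (lam : EReal) * klDiv' μ.1 (Phi x) := ereal_mul_nonneg' hlam.le hk0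
    unfold eInt
    split_ifs with hI
    · have hint : Mcl l φ x ≤ ∫ ξ, (φ (x + ξ) + l ξ) ∂μ.1 := by
        have h2 := integral_mono (integrable_const (Mcl l φ x)) hI (fun ξ => hMcl_le x ξ)
        rwa [integral_const, probReal_univ, smul_eq_mul, one_mul] at h2
      calc ((Mcl l φ x : ℝ) : EReal) ≤ ((∫ ξ, (φ (x + ξ) + l ξ) ∂μ.1 : ℝ) : EReal) := by
            exact_mod_cast hint
        _ = ((∫ ξ, (φ (x + ξ) + l ξ) ∂μ.1 : ℝ) : EReal) + 0 := (add_zero _).symm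
        _ ≤ _ + (lam : EReal) * klDiv' μ.1 (Phi x) := add_le_add_right hm0 _
    · rw [EReal.top_add_of_ne_bot ((lt_of_lt_of_le (by simp : (⊥:EReal) < 0) hm0).ne')]
      exact le_top
  -- monotonicity
  have mono : ∀ x : ℝ, ∀ lam lam' : ℝ, 0 < lam → lam ≤ lam' →
      Mlam l lam φ x ≤ Mlam l lam' φ x := by
    intro x lam lam' h0 hle
    haveI := hPx x
    refine iInf_mono fun μ => ?_
    haveI := μ.2.1
    exact add_le_add_right
      (ereal_mul_mono' h0 hle (klDiv'_nonneg _ _) (klDiv'_ne_bot _ _)) _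
  -- main construction
  have key : ∀ x u : ℝ, Mcl l φ x < u →
      ∃ lam₀ : ℝ, 0 < lam₀ ∧ Mlam l lam₀ φ x ≤ (u : EReal) := by
    intro x u h
    haveI := hPx x
    obtain ⟨ξ₀, hξ₀⟩ := exists_lt_of_ciInf_lt
      (show (⨅ ξ : ℝ, (φ (x + ξ) + l ξ)) < u from h)
    set ε := u - (φ (x + ξ₀) + l ξ₀) with hε_def
    have hε : 0 < ε := by rw [hε_def]; linarith
    set Lf := Lφ + Ll with hLf_def
    have hLf0 : 0 ≤ Lf := by rw [hLf_def]; linarith [hl.Ll_pos]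
    set δ := min 1 (ε / 2 / (Lf + 1)) with hδ_def
    have hδpos : 0 < δ := lt_min one_pos (by positivity)
    have hLfδ : Lf * δ ≤ ε / 2 := by
      have h1 : (Lf + 1) * δ ≤ (Lf + 1) * (ε / 2 / (Lf + 1)) :=
        mul_le_mul_of_nonneg_left (min_le_right _ _) (by linarith)
      rw [mul_div_cancel₀ _ (by linarith : Lf + 1 ≠ 0)] at h1
      nlinarith
    set I := Set.Icc (ξ₀ - δ) (ξ₀ + δ) with hI_def
    set B := φ (x + ξ₀) + l ξ₀ + Lf * δ with hB_def
    have hfB : ∀ ξ ∈ I, φ (x + ξ) + l ξ ≤ B := by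
      intro ξ hξ
      have habs : |ξ - ξ₀| ≤ δ := by
        rw [abs_le]
        exact ⟨by linarith [hξ.1], by linarith [hξ.2]⟩
      have h1 := hφ (x + ξ) (x + ξ₀)
      rw [show x + ξ - (x + ξ₀) = ξ - ξ₀ by ring] at h1
      have h2 := hl.l_lip ξ ξ₀
      have h3 : Lφ * |ξ - ξ₀| ≤ Lφ * δ := mul_le_mul_of_nonneg_left habs hLφ0
      have h4 : Ll * |ξ - ξ₀| ≤ Ll * δ := mul_le_mul_of_nonneg_left habs hl.Ll_pos.le
      have h5 := le_abs_self (φ (x + ξ) - φ (x + ξ₀))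
      have h6 := le_abs_self (l ξ - l ξ₀)
      have hsplit : Lf * δ = Lφ * δ + Ll * δ := by rw [hLf_def]; ring
      rw [hB_def]
      linarith
    have hp0 : Phi x I ≠ 0 := by
      intro h0
      have hvac : (volume : Measure ℝ) ≪ Phi x :=
        gaussianReal_absolutelyContinuous' (-x) one_ne_zero
      have hv0 := hvac h0
      rw [hI_def, Real.volume_Icc] at hv0
      rw [ENNReal.ofReal_eq_zero] at hv0
      linarith
    set p := Phi x I with hp_def
    have hpne : p ≠ ∞ := measure_ne_top _ _
    set μ := (Phi x)[|I] with hμ_def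
    have hcond : μ = p⁻¹ • (Phi x).restrict I := rfl
    haveI hμprob : IsProbabilityMeasure μ := cond_isProbabilityMeasure hp0
    have hμac : μ ≪ Phi x := cond_absolutelyContinuous
    have hrn : μ.rnDeriv (Phi x) =ᵐ[Phi x]
        fun ξ => p⁻¹ * I.indicator (1 : ℝ → ℝ≥0∞) ξ := by
      have h1 : ((p⁻¹ • (Phi x).restrict I)).rnDeriv (Phi x) =ᵐ[Phi x]
          p⁻¹ • ((Phi x).restrict I).rnDeriv (Phi x) :=
        Measure.rnDeriv_smul_left_of_ne_top ((Phi x).restrict I) (Phi x)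
          (by simp [hp0])
      have h2 := Measure.rnDeriv_restrict_self (Phi x)
        (measurableSet_Icc : MeasurableSet I)
      rw [hcond]
      filter_upwards [h1, h2] with ξ hξ1 hξ2
      rw [hξ1, Pi.smul_apply, hξ2, smul_eq_mul]
    have hμI : ∀ᵐ ξ ∂μ, ξ ∈ I := by
      have h0 : μ Iᶜ = 0 := by
        rw [hcond, Measure.smul_apply, Measure.restrict_apply measurableSet_Icc.compl]
        simp
        exact Or.inr (by rw [hI_def]; simp)
      have := measure_eq_zero_iff_ae_notMem.mp h0
      simpa using this
    have hrnμ : ∀ᵐ ξ ∂μ, μ.rnDeriv (Phi x) ξ = p⁻¹ := by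
      filter_upwards [hrn.filter_mono hμac.ae_le, hμI] with ξ h1 h2
      rw [h1, Set.indicator_of_mem h2, Pi.one_apply, mul_one]
    set c₀ := Real.log ((p⁻¹).toReal) with hc₀_def
    have hppos : 0 < p.toReal := ENNReal.toReal_pos hp0 hpne
    have hple : p.toReal ≤ 1 := by
      have h2 : p.toReal ≤ (1 : ℝ≥0∞).toReal := ENNReal.toReal_mono (by norm_num) prob_le_one
      simpa using h2
    have hc₀0 : 0 ≤ c₀ := by
      rw [hc₀_def, ENNReal.toReal_inv, Real.log_inv]
      linarith [Real.log_nonpos hppos.le hple]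
    have hlogμ : (fun ξ => Real.log ((μ.rnDeriv (Phi x) ξ).toReal)) =ᵐ[μ] fun _ => c₀ :=
      hrnμ.mono fun ξ h => by dsimp only; rw [h]
    have hklint : Integrable (fun ξ => Real.log ((μ.rnDeriv (Phi x) ξ).toReal)) μ :=
      (integrable_const c₀).congr hlogμ.symm
    have hklval : klDiv' μ (Phi x) = (c₀ : EReal) := by
      unfold klDiv'
      rw [if_pos ⟨hμac, hklint⟩, integral_congr_ae hlogμ, integral_const]
      norm_num
    have hFcont : Continuous (fun ξ => φ (x + ξ) + l ξ) :=
      (hφc.comp (continuous_const.add continuous_id)).add hlc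
    have hFIν : IntegrableOn (fun ξ => φ (x + ξ) + l ξ) I (Phi x) :=
      hFcont.continuousOn.integrableOn_compact isCompact_Icc
    have hFμ : Integrable (fun ξ => φ (x + ξ) + l ξ) μ := by
      rw [hcond]
      exact hFIν.smul_measure (by simp [hp0])
    have hInt_le : ∫ ξ, (φ (x + ξ) + l ξ) ∂μ ≤ B := by
      have h1 : ∫ ξ in I, (φ (x + ξ) + l ξ) ∂(Phi x) ≤ B * p.toReal := by
        have h2 : ∫ ξ in I, (φ (x + ξ) + l ξ) ∂(Phi x) ≤ ∫ _ in I, B ∂(Phi x) :=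
          setIntegral_mono_on hFIν (integrableOn_const (measure_lt_top _ _).ne)
            measurableSet_Icc hfB
        rwa [setIntegral_const, smul_eq_mul, mul_comm] at h2
      have hptval : (p⁻¹).toReal * p.toReal = 1 := by
        rw [ENNReal.toReal_inv]; exact inv_mul_cancel₀ hppos.ne'
      calc ∫ ξ, (φ (x + ξ) + l ξ) ∂μ
          = (p⁻¹).toReal * ∫ ξ in I, (φ (x + ξ) + l ξ) ∂(Phi x) := by
            rw [hcond, integral_smul_measure, smul_eq_mul]
        _ ≤ (p⁻¹).toReal * (B * p.toReal) :=
            mul_le_mul_of_nonneg_left h1 ENNReal.toReal_nonneg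
        _ = B := by rw [mul_comm B, ← mul_assoc, hptval, one_mul]
    refine ⟨min 1 (ε / 2 / (c₀ + 1)), lt_min one_pos (by positivity), ?_⟩
    set lam₀ := min 1 (ε / 2 / (c₀ + 1)) with hlam_def
    have hlam0 : 0 < lam₀ := lt_min one_pos (by positivity)
    have hlamc : lam₀ * c₀ ≤ ε / 2 := by
      have h1 : lam₀ * (c₀ + 1) ≤ (ε / 2 / (c₀ + 1)) * (c₀ + 1) :=
        mul_le_mul_of_nonneg_right (min_le_right _ _) (by linarith)
      rw [div_mul_cancel₀ _ (by linarith : c₀ + 1 ≠ 0)] at h1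
      nlinarith
    have hterm : eInt (fun ξ => φ (x + ξ) + l ξ) μ + (lam₀ : EReal) * klDiv' μ (Phi x)
        ≤ (u : EReal) := by
      rw [show eInt (fun ξ => φ (x + ξ) + l ξ) μ
          = ((∫ ξ, (φ (x + ξ) + l ξ) ∂μ : ℝ) : EReal) from by unfold eInt; rw [if_pos hFμ],
        hklval, ← EReal.coe_mul, ← EReal.coe_add, EReal.coe_le_coe_iff]
      have hBv : B = φ (x + ξ₀) + l ξ₀ + Lf * δ := hB_def
      have hεv : ε = u - (φ (x + ξ₀) + l ξ₀) := hε_def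
      clear_value B ε Lf δ c₀ lam₀
      linarith [hInt_le, hLfδ, hlamc, hBv, hεv]
    unfold Mlam
    refine iInf_le_of_le ⟨μ, hμprob, hμac⟩ ?_
    exact hterm
  refine ⟨key, ?_⟩
  intro x
  rw [tendsto_order]
  constructor
  · intro a ha
    exact eventually_nhdsWithin_of_forall fun lam hlam =>
      lt_of_lt_of_le ha (lb x lam hlam)
  · intro b hb
    obtain ⟨u, hu1, hu2⟩ : ∃ u : ℝ, Mcl l φ x < u ∧ (u : EReal) < b := by
      induction b using EReal.rec with
      | bot => exact absurd hb (by simp)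
      | coe r =>
          have hr : Mcl l φ x < r := by exact_mod_cast hb
          exact ⟨(Mcl l φ x + r) / 2, by linarith,
            by rw [EReal.coe_lt_coe_iff]; linarith⟩
      | top =>
          refine ⟨Mcl l φ x + 1, by linarith, ?_⟩
          exact_mod_cast EReal.coe_lt_top (Mcl l φ x + 1)
    obtain ⟨lam₀, hlam₀, hM⟩ := key x u hu1
    have hev : ∀ᶠ lam in nhdsWithin (0:ℝ) (Set.Ioi 0), lam < lam₀ :=
      Filter.Eventually.filter_mono nhdsWithin_le_nhds (eventually_lt_nhds hlam₀)
    filter_upwards [hev, self_mem_nhdsWithin] with lam hlt hmem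
    exact lt_of_le_of_lt (le_trans (mono x lam lam₀ hmem hlt.le) hM) hu2
end
end

section
/- Let λ > 0, let ψ: ℝ → ℝ be Lipschitz with constant L and bounded below, and let l be Lipschitz with constant L_l. Then the integral I := ∫ exp((L + L_l)|η|/λ) dγ(η) over the standard Gaussian measure γ = N(0,1) is finite, and for every x ∈ ℝ, M^λψ(x) ≥ ψ(0) + l(−x) − λ·log I. -/
open MeasureTheory ProbabilityTheory Real Filter
open scoped Classical

noncomputable section

/-- Exponential of a linear function of `|η|` is Gaussian-integrable. -/
lemma exp_abs_integrable (c : ℝ) :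
    Integrable (fun η : ℝ => Real.exp (c * |η|)) (gaussianReal 0 1) := by
  rw [gaussianReal_of_var_ne_zero 0 one_ne_zero,
    integrable_withDensity_iff (measurable_gaussianPDF 0 1)
      (ae_of_all _ fun x => ENNReal.ofReal_lt_top)]
  have hpt : ∀ x : ℝ, rexp (c * |x|) * (gaussianPDF 0 1 x).toReal
      ≤ (√(2 * π))⁻¹ * rexp (c ^ 2) * rexp (-(4⁻¹) * x ^ 2) := by
    intro x
    rw [gaussianPDF, ENNReal.toReal_ofReal (gaussianPDFReal_nonneg _ _ _), gaussianPDFReal]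
    simp only [NNReal.coe_one, mul_one, sub_zero]
    rw [show rexp (c * |x|) * ((√(2 * π))⁻¹ * rexp (-x ^ 2 / 2))
        = (√(2 * π))⁻¹ * rexp (c * |x| + -x ^ 2 / 2) by rw [Real.exp_add]; ring,
      show (√(2 * π))⁻¹ * rexp (c ^ 2) * rexp (-(4⁻¹) * x ^ 2)
        = (√(2 * π))⁻¹ * rexp (c ^ 2 + -(4⁻¹) * x ^ 2) by rw [Real.exp_add]; ring]
    have h2 : c * |x| + -x ^ 2 / 2 ≤ c ^ 2 + -(4⁻¹) * x ^ 2 := by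
      nlinarith [sq_nonneg (c - |x| / 2), sq_abs x, abs_nonneg x, sq_nonneg (c + |x| / 2)]
    have := Real.exp_le_exp.mpr h2
    have hs : (0:ℝ) ≤ (√(2 * π))⁻¹ := by positivity
    exact mul_le_mul_of_nonneg_left this hs
  refine Integrable.mono' (((integrable_exp_neg_mul_sq (by norm_num : (0:ℝ) < 4⁻¹)).const_mul
    ((√(2 * π))⁻¹ * rexp (c ^ 2)))) ?_ (ae_of_all _ fun x => ?_)
  · exact ((Real.continuous_exp.comp
      (continuous_const.mul continuous_abs)).aestronglyMeasurable).mul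
      ((measurable_gaussianPDF 0 1).ennreal_toReal.aestronglyMeasurable)
  · rw [Real.norm_eq_abs, abs_of_nonneg (by positivity)]
    simpa [mul_assoc] using hpt x

/-- Donsker–Varadhan / Gibbs inequality. -/
lemma gibbs_ineq (μ ν : Measure ℝ) [IsProbabilityMeasure μ] [IsProbabilityMeasure ν]
    (hac : μ ≪ ν) (g : ℝ → ℝ) (hg : Measurable g) (hg0 : ∀ ξ, 0 ≤ g ξ)
    (hexp : Integrable (fun ξ => Real.exp (g ξ)) ν)
    (hlog : Integrable (fun ξ => Real.log ((μ.rnDeriv ν ξ).toReal)) μ) :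
    Integrable g μ ∧
    ∫ ξ, g ξ ∂μ ≤ (∫ ξ, Real.log ((μ.rnDeriv ν ξ).toReal) ∂μ)
      + Real.log (∫ ξ, Real.exp (g ξ) ∂ν) := by
  set ρ : ℝ → ENNReal := μ.rnDeriv ν with hρ
  have hρm : Measurable ρ := Measure.measurable_rnDeriv μ ν
  have hw : ν.withDensity ρ = μ := Measure.withDensity_rnDeriv_eq μ ν hac
  set I : ℝ := ∫ ξ, Real.exp (g ξ) ∂ν with hI
  have hI1 : 1 ≤ I := by
    calc (1:ℝ) = ∫ _ξ, (1:ℝ) ∂ν := by simp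
    _ ≤ I := integral_mono (integrable_const 1) hexp fun ξ => Real.one_le_exp (hg0 ξ)
  have hIpos : (0:ℝ) < I := lt_of_lt_of_le one_pos hI1
  set F : ℝ → ℝ := fun ξ => Real.exp (g ξ) / (ρ ξ).toReal with hF
  have hFm : Measurable F := (Real.measurable_exp.comp hg).div hρm.ennreal_toReal
  have hF0 : ∀ ξ, 0 ≤ F ξ := fun ξ => div_nonneg (Real.exp_nonneg _) ENNReal.toReal_nonneg
  -- key lintegral bound
  have hlint : ∫⁻ ξ, ENNReal.ofReal (F ξ) ∂μ ≤ ENNReal.ofReal I := by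
    rw [← hw, lintegral_withDensity_eq_lintegral_mul _ hρm hFm.ennreal_ofReal]
    have hpt : ∀ᵐ ξ ∂ν, (ρ * fun a => ENNReal.ofReal (F a)) ξ
        ≤ ENNReal.ofReal (Real.exp (g ξ)) := by
      filter_upwards [Measure.rnDeriv_lt_top μ ν] with ξ hlt
      simp only [Pi.mul_apply]
      by_cases hz : ρ ξ = 0
      · simp [hz]
      · have hpos : 0 < (ρ ξ).toReal := ENNReal.toReal_pos hz hlt.ne
        rw [show ρ ξ = ENNReal.ofReal ((ρ ξ).toReal) from (ENNReal.ofReal_toReal hlt.ne).symm,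
          ← ENNReal.ofReal_mul hpos.le]
        apply ENNReal.ofReal_le_ofReal
        rw [hF]
        rw [mul_div_assoc']
        rw [mul_comm, mul_div_assoc, div_self hpos.ne', mul_one]
    calc ∫⁻ ξ, (ρ * fun a => ENNReal.ofReal (F a)) ξ ∂ν
        ≤ ∫⁻ ξ, ENNReal.ofReal (Real.exp (g ξ)) ∂ν := lintegral_mono_ae hpt
      _ = ENNReal.ofReal I :=
        (ofReal_integral_eq_lintegral_ofReal hexp
          (ae_of_all _ fun ξ => Real.exp_nonneg _)).symm
  have hFint : Integrable F μ := by
    refine ⟨hFm.aestronglyMeasurable, ?_⟩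
    rw [hasFiniteIntegral_iff_ofReal (ae_of_all _ hF0)]
    exact lt_of_le_of_lt hlint ENNReal.ofReal_lt_top
  have hFle : ∫ ξ, F ξ ∂μ ≤ I := by
    rw [integral_eq_lintegral_of_nonneg_ae (ae_of_all _ hF0) hFm.aestronglyMeasurable]
    exact ENNReal.toReal_le_of_le_ofReal hIpos.le hlint
  -- pointwise inequality
  have hpt : ∀ᵐ ξ ∂μ, g ξ ≤ Real.log ((ρ ξ).toReal) + Real.log I + (F ξ / I - 1) := by
    filter_upwards [Measure.rnDeriv_pos hac, hac.ae_le (Measure.rnDeriv_lt_top μ ν)]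
      with ξ h0 hlt
    have hρpos : 0 < (ρ ξ).toReal := ENNReal.toReal_pos h0.ne' hlt.ne
    have hu : 0 < Real.exp (g ξ) / ((ρ ξ).toReal * I) := by positivity
    have hlsub := Real.log_le_sub_one_of_pos hu
    rw [Real.log_div (Real.exp_ne_zero _) (by positivity), Real.log_exp,
      Real.log_mul hρpos.ne' hIpos.ne'] at hlsub
    have hFdiv : Real.exp (g ξ) / ((ρ ξ).toReal * I) = F ξ / I := by
      rw [hF, div_div]
    rw [hFdiv] at hlsub
    linarith
  have hrhs : Integrable (fun ξ => Real.log ((ρ ξ).toReal) + Real.log I + (F ξ / I - 1)) μ :=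
    (hlog.add (integrable_const _)).add ((hFint.div_const I).sub (integrable_const 1))
  have hgint : Integrable g μ := by
    refine Integrable.mono' hrhs hg.aestronglyMeasurable ?_
    filter_upwards [hpt] with ξ h
    rw [Real.norm_eq_abs, abs_of_nonneg (hg0 ξ)]
    exact h
  refine ⟨hgint, ?_⟩
  have h1 : ∫ ξ, g ξ ∂μ ≤ ∫ ξ, (Real.log ((ρ ξ).toReal) + Real.log I + (F ξ / I - 1)) ∂μ :=
    integral_mono_ae hgint hrhs hpt
  have ha : Integrable (fun ξ => Real.log ((ρ ξ).toReal) + Real.log I) μ :=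
    hlog.add (integrable_const _)
  have hb : Integrable (fun ξ => F ξ / I - 1) μ :=
    (hFint.div_const I).sub (integrable_const 1)
  have hc : Integrable (fun ξ => F ξ / I) μ := hFint.div_const I
  have h2 : ∫ ξ, (Real.log ((ρ ξ).toReal) + Real.log I + (F ξ / I - 1)) ∂μ
      = (∫ ξ, Real.log ((ρ ξ).toReal) ∂μ) + Real.log I + ((∫ ξ, F ξ ∂μ) / I - 1) := by
    rw [integral_add ha hb, integral_add hlog (integrable_const _),
      integral_sub hc (integrable_const 1), integral_div]
    simp
  have h3 : (∫ ξ, F ξ ∂μ) / I - 1 ≤ 0 := by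
    rw [sub_nonpos, div_le_one hIpos]
    exact hFle
  rw [h2] at h1
  linarith

/-- the exponential moment `I = ∫ exp((L+L_l)|η|/λ) dN(0,1)(η)` is finite,
and `M^λψ(x) ≥ ψ(0) + l(−x) − λ log I` for every `x`. -/
theorem stmt_17 (l : ℝ → ℝ) (K Ll : ℝ) (hl : CostHyp l K Ll)
    (lam : ℝ) (hlam : 0 < lam) (L : ℝ)
    (ψ : ℝ → ℝ) (hψlip : ∀ a b, |ψ a - ψ b| ≤ L * |a - b|) (hψb : BddBelowFun ψ) :
    Integrable (fun η => Real.exp ((L + Ll) * |η| / lam)) (gaussianReal 0 1) ∧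
    ∀ x : ℝ,
      ((ψ 0 + l (-x)
          - lam * Real.log (∫ η, Real.exp ((L + Ll) * |η| / lam) ∂(gaussianReal 0 1)) : ℝ) : EReal)
        ≤ Mlam l lam ψ x := by
  have hL : 0 ≤ L := by
    have h1 := hψlip 1 0
    rw [show |(1:ℝ) - 0| = 1 by norm_num, mul_one] at h1
    exact le_trans (abs_nonneg _) h1
  have hcnn : 0 ≤ (L + Ll) / lam := div_nonneg (by linarith [hl.Ll_pos]) hlam.le
  have hfe : (fun η : ℝ => rexp ((L + Ll) * |η| / lam))
      = fun η => rexp (((L + Ll) / lam) * |η|) := by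
    funext η; congr 1; ring
  rw [hfe]
  set c : ℝ := (L + Ll) / lam with hc
  refine ⟨exp_abs_integrable c, fun x => ?_⟩
  set I : ℝ := ∫ η, rexp (c * |η|) ∂(gaussianReal 0 1) with hIdef
  have hmap : (Phi x).map (fun ξ => x + ξ) = gaussianReal 0 1 := by
    rw [Phi]
    have h := gaussianReal_map_const_add (μ := -x) (v := 1) x
    rw [show -x + x = 0 by ring] at h
    exact h
  haveI : IsProbabilityMeasure (Phi x) := by rw [Phi]; infer_instance
  rw [Mlam]
  refine le_iInf fun μp => ?_
  obtain ⟨μ, hprob, hacμ⟩ := μp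
  dsimp only
  haveI := hprob
  by_cases h2 : μ ≪ Phi x ∧ Integrable (fun ξ => Real.log ((μ.rnDeriv (Phi x) ξ).toReal)) μ
  · -- KL finite
    obtain ⟨hac', hlog⟩ := h2
    -- the test function g
    have hgm : Measurable (fun ξ : ℝ => c * |x + ξ|) :=
      ((measurable_id.const_add x).abs).const_mul c
    have hg0 : ∀ ξ : ℝ, 0 ≤ c * |x + ξ| := fun ξ => mul_nonneg hcnn (abs_nonneg _)
    have hexpg : Integrable (fun ξ => rexp (c * |x + ξ|)) (Phi x) := by
      have h0 : Integrable (fun η => rexp (c * |η|)) ((Phi x).map (fun ξ => x + ξ)) := by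
        rw [hmap]; exact exp_abs_integrable c
      have hsm : AEStronglyMeasurable (fun η : ℝ => rexp (c * |η|))
          ((Phi x).map (fun ξ => x + ξ)) :=
        (Real.continuous_exp.comp (continuous_const.mul continuous_abs)).aestronglyMeasurable
      exact (integrable_map_measure hsm (measurable_id.const_add x).aemeasurable).mp h0
    have hIeq : ∫ ξ, rexp (c * |x + ξ|) ∂(Phi x) = I := by
      have h := integral_map (μ := Phi x) (φ := fun ξ => x + ξ)
        (measurable_id.const_add x).aemeasurable
        (f := fun η => rexp (c * |η|))
        (Real.continuous_exp.comp (continuous_const.mul continuous_abs)).aestronglyMeasurable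
      rw [hIdef, ← hmap]
      exact h.symm
    obtain ⟨hgint, hgibbs⟩ := gibbs_ineq μ (Phi x) hac' (fun ξ => c * |x + ξ|) hgm hg0
      hexpg hlog
    rw [hIeq] at hgibbs
    by_cases h1 : Integrable (fun ξ => ψ (x + ξ) + l ξ) μ
    · rw [eInt, if_pos h1, klDiv', if_pos ⟨hac', hlog⟩, ← EReal.coe_mul, ← EReal.coe_add,
        EReal.coe_le_coe_iff]
      have hlb : ∀ ξ, ψ 0 + l (-x) - lam * (c * |x + ξ|) ≤ ψ (x + ξ) + l ξ := by
        intro ξ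
        have h1' : ψ 0 - ψ (x + ξ) ≤ L * |x + ξ| := by
          have hh := hψlip 0 (x + ξ)
          rw [show |(0:ℝ) - (x + ξ)| = |x + ξ| by rw [zero_sub, abs_neg]] at hh
          exact le_trans (le_abs_self _) hh
        have h2' : l (-x) - l ξ ≤ Ll * |x + ξ| := by
          have hh := hl.l_lip (-x) ξ
          rw [show |(-x) - ξ| = |x + ξ| by rw [← abs_neg]; congr 1; ring] at hh
          exact le_trans (le_abs_self _) hh
        have hgval : lam * (c * |x + ξ|) = L * |x + ξ| + Ll * |x + ξ| := by
          rw [hc]; field_simp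
        linarith
      have hlhs_int : Integrable (fun ξ => ψ 0 + l (-x) - lam * (c * |x + ξ|)) μ :=
        (integrable_const _).sub (hgint.const_mul lam)
      have hmono := integral_mono hlhs_int h1 hlb
      have hval : ∫ ξ, (ψ 0 + l (-x) - lam * (c * |x + ξ|)) ∂μ
          = ψ 0 + l (-x) - lam * ∫ ξ, c * |x + ξ| ∂μ := by
        rw [integral_sub (integrable_const _) (hgint.const_mul lam), integral_const,
          integral_const_mul]
        simp
      rw [hval] at hmono
      have hmul := mul_le_mul_of_nonneg_left hgibbs hlam.le
      linarith
    · rw [eInt, if_neg h1, klDiv', if_pos ⟨hac', hlog⟩, ← EReal.coe_mul,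
        EReal.top_add_of_ne_bot (EReal.coe_ne_bot _)]
      exact le_top
  · rw [klDiv', if_neg h2, EReal.coe_mul_top_of_pos hlam, EReal.add_top_of_ne_bot]
    · exact le_top
    · rw [eInt]
      split_ifs
      · exact EReal.coe_ne_bot _
      · exact top_ne_bot
end
end
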